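/- arXiv:1910.09596 — 5 statements merged into one kernel-verified Lean document; each statement's English description precedes it below -/
import Mathlib

section
/- Tsirelson's bound: if A, A', B, B' are self-adjoint operators on a Hilbert space with A² = A'² = B² = B'² = 1, A and A' commute with B and B', then the operator C = A⊗B + A⊗B' + A'⊗B - A'⊗B' (or AB + AB' + A'B - A'B' in the commuting framework) satisfies ‖C‖ ≤ 2√2. -/
/-- In any ring, if `A, A', B, B'` are involutions with each of `A, A'` commuting with
each of `B, B'`, then `(AB + AB' + A'B - A'B')² = 4 - [A,A'][B,B']`. -/
lemma tsirelson_quad_identity {R : Type*} [Ring R] (A A' B B' : R)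
    (hA2 : A * A = 1) (hA'2 : A' * A' = 1) (hB2 : B * B = 1) (hB'2 : B' * B' = 1)
    (hAB : Commute A B) (hAB' : Commute A B') (hA'B : Commute A' B)
    (hA'B' : Commute A' B') :
    (A * B + A * B' + A' * B - A' * B') * (A * B + A * B' + A' * B - A' * B') =
      4 - (A * A' - A' * A) * (B * B' - B' * B) := by
  have e1 : ∀ x : R, B * (A * x) = A * (B * x) := fun x => by
    rw [← mul_assoc, ← hAB.eq, mul_assoc]
  have e2 : ∀ x : R, B * (A' * x) = A' * (B * x) := fun x => by
    rw [← mul_assoc, ← hA'B.eq, mul_assoc]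
  have e3 : ∀ x : R, B' * (A * x) = A * (B' * x) := fun x => by
    rw [← mul_assoc, ← hAB'.eq, mul_assoc]
  have e4 : ∀ x : R, B' * (A' * x) = A' * (B' * x) := fun x => by
    rw [← mul_assoc, ← hA'B'.eq, mul_assoc]
  have f1 : B * A = A * B := hAB.eq.symm
  have f2 : B * A' = A' * B := hA'B.eq.symm
  have f3 : B' * A = A * B' := hAB'.eq.symm
  have f4 : B' * A' = A' * B' := hA'B'.eq.symm
  have sA : ∀ x : R, A * (A * x) = x := fun x => by rw [← mul_assoc, hA2, one_mul]
  have sA' : ∀ x : R, A' * (A' * x) = x := fun x => by rw [← mul_assoc, hA'2, one_mul]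
  have sB : ∀ x : R, B * (B * x) = x := fun x => by rw [← mul_assoc, hB2, one_mul]
  have sB' : ∀ x : R, B' * (B' * x) = x := fun x => by rw [← mul_assoc, hB'2, one_mul]
  have h4 : (4 : R) = 1 + 1 + 1 + 1 := by norm_num
  rw [h4]
  simp only [mul_add, add_mul, mul_sub, sub_mul, mul_assoc, e1, e2, e3, e4, f1, f2, f3, f4,
    sA, sA', sB, sB', hA2, hA'2, hB2, hB'2, mul_one, one_mul]
  abel

/-- Tsirelson's bound: if `A, A', B, B'` are self-adjoint involutions on a
finite-dimensional complex Hilbert space such that each of `A, A'` commutes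
with each of `B, B'`, then `‖A*B + A*B' + A'*B - A'*B'‖ ≤ 2√2`. -/
theorem tsirelson_bound {E : Type*} [NormedAddCommGroup E] [InnerProductSpace ℂ E]
    [FiniteDimensional ℂ E] [CompleteSpace E]
    (A A' B B' : E →L[ℂ] E)
    (hA : IsSelfAdjoint A) (hA' : IsSelfAdjoint A')
    (hB : IsSelfAdjoint B) (hB' : IsSelfAdjoint B')
    (hA2 : A * A = 1) (hA'2 : A' * A' = 1) (hB2 : B * B = 1) (hB'2 : B' * B' = 1)
    (hAB : Commute A B) (hAB' : Commute A B') (hA'B : Commute A' B)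
    (hA'B' : Commute A' B') :
    ‖A * B + A * B' + A' * B - A' * B'‖ ≤ 2 * Real.sqrt 2 := by
  have quad := tsirelson_quad_identity A A' B B' hA2 hA'2 hB2 hB'2 hAB hAB' hA'B hA'B'
  set C := A * B + A * B' + A' * B - A' * B' with hC
  have hCsa : IsSelfAdjoint C := by
    have h1 : IsSelfAdjoint (A * B) := by
      rw [IsSelfAdjoint, star_mul, hA.star_eq, hB.star_eq, hAB.eq]
    have h2 : IsSelfAdjoint (A * B') := by
      rw [IsSelfAdjoint, star_mul, hA.star_eq, hB'.star_eq, hAB'.eq]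
    have h3 : IsSelfAdjoint (A' * B) := by
      rw [IsSelfAdjoint, star_mul, hA'.star_eq, hB.star_eq, hA'B.eq]
    have h4 : IsSelfAdjoint (A' * B') := by
      rw [IsSelfAdjoint, star_mul, hA'.star_eq, hB'.star_eq, hA'B'.eq]
    exact ((h1.add h2).add h3).sub h4
  have hone : ‖(1 : E →L[ℂ] E)‖ ≤ 1 := ContinuousLinearMap.norm_id_le
  have normsq : ∀ X : E →L[ℂ] E, IsSelfAdjoint X → X * X = 1 → ‖X‖ ≤ 1 := by
    intro X hX hX2
    have h : ‖star X * X‖ = ‖X‖ * ‖X‖ := CStarRing.norm_star_mul_self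
    rw [hX.star_eq, hX2] at h
    nlinarith [norm_nonneg X]
  have nA := normsq A hA hA2
  have nA' := normsq A' hA' hA'2
  have nB := normsq B hB hB2
  have nB' := normsq B' hB' hB'2
  have hC2 : ‖C‖ * ‖C‖ = ‖C * C‖ := by
    rw [← CStarRing.norm_star_mul_self, hCsa.star_eq]
  have m1 : ‖A * A'‖ ≤ 1 := (norm_mul_le _ _).trans
    (by nlinarith [norm_nonneg A, norm_nonneg A'])
  have m2 : ‖A' * A‖ ≤ 1 := (norm_mul_le _ _).trans
    (by nlinarith [norm_nonneg A, norm_nonneg A'])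
  have m3 : ‖B * B'‖ ≤ 1 := (norm_mul_le _ _).trans
    (by nlinarith [norm_nonneg B, norm_nonneg B'])
  have m4 : ‖B' * B‖ ≤ 1 := (norm_mul_le _ _).trans
    (by nlinarith [norm_nonneg B, norm_nonneg B'])
  have hcommA : ‖A * A' - A' * A‖ ≤ 2 := (norm_sub_le _ _).trans (by linarith)
  have hcommB : ‖B * B' - B' * B‖ ≤ 2 := (norm_sub_le _ _).trans (by linarith)
  have h4 : ‖(4 : E →L[ℂ] E)‖ ≤ 4 := by
    rw [show (4 : E →L[ℂ] E) = 1 + 1 + 1 + 1 from by norm_num]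
    have h2 : ‖(1 : E →L[ℂ] E) + 1‖ ≤ 2 := (norm_add_le _ _).trans (by linarith)
    have h3 : ‖(1 : E →L[ℂ] E) + 1 + 1‖ ≤ 3 := (norm_add_le _ _).trans (by linarith)
    exact (norm_add_le _ _).trans (by linarith)
  have hmul : ‖(A * A' - A' * A) * (B * B' - B' * B)‖ ≤ 4 := (norm_mul_le _ _).trans
    (by nlinarith [norm_nonneg (A * A' - A' * A)])
  have h8 : ‖C * C‖ ≤ 8 := by
    rw [quad]
    exact (norm_sub_le _ _).trans (by linarith)
  have hsq : ‖C‖ * ‖C‖ ≤ 8 := by rw [hC2]; exact h8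
  have hs : Real.sqrt 2 * Real.sqrt 2 = 2 := Real.mul_self_sqrt (by norm_num)
  nlinarith [norm_nonneg C, Real.sqrt_nonneg 2, sq_nonneg (‖C‖ - 2 * Real.sqrt 2)]
end

section
/- A frame function over product bases f : σ(H) → ℝ on a bipartite system that satisfies the no-signalling condition (8) is invariant under local two-dimensional rotations of basis elements: if x ∈ H₁ is a unit vector and v₁, v₂ and w₁, w₂ are pairs of orthonormal vectors in H₂ spanning the same two-dimensional subspace, then f(x⊗v₁) + f(x⊗v₂) = f(x⊗w₁) + f(x⊗w₂). -/
set_option maxHeartbeats 1000000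

open Module

/-- The elementary tensor of two vectors, realised in
`EuclideanSpace ℂ (Fin n × Fin m) ≅ ℂⁿ ⊗ ℂᵐ`. -/
noncomputable def prodVec {n m : ℕ} (x : EuclideanSpace ℂ (Fin n))
    (y : EuclideanSpace ℂ (Fin m)) : EuclideanSpace ℂ (Fin n × Fin m) :=
  (WithLp.equiv 2 _).symm fun p => x p.1 * y p.2

/-- A frame function over product bases satisfying the no-signalling condition
is invariant under local two-dimensional rotations of basis elements: for a
unit vector `x` in the first factor and orthonormal pairs `v₁, v₂` and
`w₁, w₂` in the second factor spanning the same two-dimensional subspace,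
`f(x⊗v₁) + f(x⊗v₂) = f(x⊗w₁) + f(x⊗w₂)`. -/
theorem nonsignalling_frame_function_two_dim_invariance {n m : ℕ}
    (f : EuclideanSpace ℂ (Fin n × Fin m) → ℝ) (W : ℝ)
    (hweight : ∀ (b₁ : OrthonormalBasis (Fin n) ℂ (EuclideanSpace ℂ (Fin n)))
      (b₂ : OrthonormalBasis (Fin m) ℂ (EuclideanSpace ℂ (Fin m))),
      ∑ j, ∑ k, f (prodVec (b₁ j) (b₂ k)) = W)
    (hns₂ : ∀ x : EuclideanSpace ℂ (Fin n), ‖x‖ = 1 →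
      ∀ v w : OrthonormalBasis (Fin m) ℂ (EuclideanSpace ℂ (Fin m)),
      ∑ j, f (prodVec x (v j)) = ∑ k, f (prodVec x (w k)))
    (hns₁ : ∀ y : EuclideanSpace ℂ (Fin m), ‖y‖ = 1 →
      ∀ v w : OrthonormalBasis (Fin n) ℂ (EuclideanSpace ℂ (Fin n)),
      ∑ j, f (prodVec (v j) y) = ∑ k, f (prodVec (w k) y))
    (x : EuclideanSpace ℂ (Fin n)) (hx : ‖x‖ = 1)
    (v₁ v₂ w₁ w₂ : EuclideanSpace ℂ (Fin m))
    (hv : Orthonormal ℂ ![v₁, v₂]) (hw : Orthonormal ℂ ![w₁, w₂])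
    (hspan : Submodule.span ℂ {v₁, v₂} = Submodule.span ℂ {w₁, w₂}) :
    f (prodVec x v₁) + f (prodVec x v₂) = f (prodVec x w₁) + f (prodVec x w₂) := by
  classical
  have hm2 : 2 ≤ m := by
    have h := hv.linearIndependent.fintype_card_le_finrank
    simpa using h
  have hcard : Module.finrank ℂ (EuclideanSpace ℂ (Fin m)) = Fintype.card (Fin m) := by simp
  let i0 : Fin m := ⟨0, by omega⟩
  let i1 : Fin m := ⟨1, by omega⟩
  have h01 : i0 ≠ i1 := by simp [i0, i1, Fin.ext_iff]
  -- extend v₁, v₂ to an orthonormal basis b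
  let V : Fin m → EuclideanSpace ℂ (Fin m) := fun i => if h : (i : ℕ) < 2 then ![v₁, v₂] ⟨i, h⟩ else 0
  let s : Set (Fin m) := {i | (i : ℕ) < 2}
  have hres : Orthonormal ℂ (s.restrict V) := by
    have heq : s.restrict V = ![v₁, v₂] ∘ (fun i : s => (⟨i.1, i.2⟩ : Fin 2)) := by
      funext i
      exact dif_pos i.2
    rw [heq]
    exact hv.comp _ (fun a b hab => Subtype.ext (Fin.ext (by
      simpa [Fin.ext_iff] using congrArg Fin.val hab)))
  obtain ⟨b, hb⟩ := hres.exists_orthonormalBasis_extension_of_card_eq hcard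
  have hb0 : b i0 = v₁ := by
    have := hb i0 (by simp [s, i0])
    simpa [V, i0] using this
  have hb1 : b i1 = v₂ := by
    have := hb i1 (by simp [s, i1])
    simpa [V, i1] using this
  -- inner products with w₁, w₂
  have hw11 : (inner ℂ w₁ w₁ : ℂ) = 1 := by
    rw [inner_self_eq_norm_sq_to_K]
    have := hw.1 0
    simp only [Matrix.cons_val_zero] at this
    rw [this]; norm_num
  have hw22 : (inner ℂ w₂ w₂ : ℂ) = 1 := by
    rw [inner_self_eq_norm_sq_to_K]
    have := hw.1 1
    simp only [Matrix.cons_val_one, Matrix.head_cons, Matrix.cons_val_zero] at this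
    rw [this]; norm_num
  have hw12 : (inner ℂ w₁ w₂ : ℂ) = 0 := by
    have := hw.2 (show (0 : Fin 2) ≠ 1 by decide)
    simpa only [Matrix.cons_val_zero, Matrix.cons_val_one, Matrix.head_cons] using this
  have hw21 : (inner ℂ w₂ w₁ : ℂ) = 0 := by
    rw [← inner_conj_symm, hw12, map_zero]
  have hbi : ∀ i j : Fin m, (inner ℂ (b i) (b j) : ℂ) = if i = j then 1 else 0 :=
    orthonormal_iff_ite.mp b.orthonormal
  -- b i is orthogonal to w₁ and w₂ for i ∉ {i0, i1}
  have hkey : ∀ i : Fin m, i ≠ i0 → i ≠ i1 → ∀ w ∈ Submodule.span ℂ {w₁, w₂},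
      (inner ℂ (b i) w : ℂ) = 0 := by
    intro i hi0 hi1 w hwmem
    rw [← hspan] at hwmem
    rw [Submodule.mem_span_pair] at hwmem
    obtain ⟨a, c, rfl⟩ := hwmem
    have h1 : (inner ℂ (b i) v₁ : ℂ) = 0 := by
      have := hbi i i0
      rw [if_neg hi0] at this
      rw [← hb0]; exact this
    have h2 : (inner ℂ (b i) v₂ : ℂ) = 0 := by
      have := hbi i i1
      rw [if_neg hi1] at this
      rw [← hb1]; exact this
    rw [inner_add_right, inner_smul_right, inner_smul_right, h1, h2]
    ring
  have hw1mem : w₁ ∈ Submodule.span ℂ {w₁, w₂} :=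
    Submodule.subset_span (by simp)
  have hw2mem : w₂ ∈ Submodule.span ℂ {w₁, w₂} :=
    Submodule.subset_span (by simp)
  have hbw1 : ∀ j, j ≠ i0 → j ≠ i1 → (inner ℂ (b j) w₁ : ℂ) = 0 :=
    fun j h0 h1 => hkey j h0 h1 w₁ hw1mem
  have hbw2 : ∀ j, j ≠ i0 → j ≠ i1 → (inner ℂ (b j) w₂ : ℂ) = 0 :=
    fun j h0 h1 => hkey j h0 h1 w₂ hw2mem
  have hw1b : ∀ j, j ≠ i0 → j ≠ i1 → (inner ℂ w₁ (b j) : ℂ) = 0 := by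
    intro j h0 h1; rw [← inner_conj_symm, hbw1 j h0 h1, map_zero]
  have hw2b : ∀ j, j ≠ i0 → j ≠ i1 → (inner ℂ w₂ (b j) : ℂ) = 0 := by
    intro j h0 h1; rw [← inner_conj_symm, hbw2 j h0 h1, map_zero]
  -- the rotated family
  let C : Fin m → EuclideanSpace ℂ (Fin m) :=
    fun i => if i = i0 then w₁ else if i = i1 then w₂ else b i
  have hC : Orthonormal ℂ C := by
    rw [orthonormal_iff_ite]
    intro i j
    simp only [C]
    by_cases hi0' : i = i0
    · rw [if_pos hi0']
      by_cases hj0 : j = i0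
      · rw [if_pos hj0, if_pos (hi0'.trans hj0.symm)]; exact hw11
      · rw [if_neg hj0, if_neg (show i ≠ j from fun h => hj0 (h ▸ hi0'))]
        by_cases hj1 : j = i1
        · rw [if_pos hj1]; exact hw12
        · rw [if_neg hj1]; exact hw1b j hj0 hj1
    · rw [if_neg hi0']
      by_cases hi1' : i = i1
      · rw [if_pos hi1']
        by_cases hj0 : j = i0
        · rw [if_pos hj0, if_neg (show i ≠ j from fun h => hi0' (h.trans hj0))]
          exact hw21
        · rw [if_neg hj0]
          by_cases hj1 : j = i1
          · rw [if_pos hj1, if_pos (hi1'.trans hj1.symm)]; exact hw22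
          · rw [if_neg hj1, if_neg (show i ≠ j from fun h => hj1 (h ▸ hi1'))]
            exact hw2b j hj0 hj1
      · rw [if_neg hi1']
        by_cases hj0 : j = i0
        · rw [if_pos hj0, if_neg (show i ≠ j from fun h => hi0' (h.trans hj0))]
          exact hbw1 i hi0' hi1'
        · rw [if_neg hj0]
          by_cases hj1 : j = i1
          · rw [if_pos hj1, if_neg (show i ≠ j from fun h => hi1' (h.trans hj1))]
            exact hbw2 i hi0' hi1'
          · rw [if_neg hj1]; exact hbi i j
  have hCres : Orthonormal ℂ ((Set.univ : Set (Fin m)).restrict C) :=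
    hC.comp _ Subtype.val_injective
  obtain ⟨c, hc⟩ := hCres.exists_orthonormalBasis_extension_of_card_eq hcard
  have hc' : ∀ i, c i = C i := fun i => hc i (Set.mem_univ i)
  have hc0 : c i0 = w₁ := by rw [hc' i0]; simp [C]
  have hc1 : c i1 = w₂ := by rw [hc' i1]; simp [C, h01.symm]
  -- now compare the two basis sums
  have hsum := hns₂ x hx b c
  have hzero : ∑ j, (f (prodVec x (b j)) - f (prodVec x (c j))) = 0 := by
    rw [Finset.sum_sub_distrib, hsum, sub_self]
  have hsub : ({i0, i1} : Finset (Fin m)) ⊆ Finset.univ := Finset.subset_univ _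
  have hout : ∀ j ∈ Finset.univ, j ∉ ({i0, i1} : Finset (Fin m)) →
      f (prodVec x (b j)) - f (prodVec x (c j)) = 0 := by
    intro j _ hj
    simp only [Finset.mem_insert, Finset.mem_singleton, not_or] at hj
    rw [hc' j]
    simp [C, hj.1, hj.2]
  have hpair : ∑ j ∈ ({i0, i1} : Finset (Fin m)),
      (f (prodVec x (b j)) - f (prodVec x (c j))) = 0 := by
    rw [Finset.sum_subset hsub hout, hzero]
  rw [Finset.sum_pair h01] at hpair
  rw [hb0, hb1, hc0, hc1] at hpair
  linarith
end

section
/- Conversely, if a function f on product unit vectors of H₁⊗H₂ has constant sum W on all product bases and satisfies the two-dimensional subspace invariance (f(x⊗v₁)+f(x⊗v₂) = f(x⊗w₁)+f(x⊗w₂) whenever span{v₁,v₂} = span{w₁,w₂} with each pair orthonormal), then f satisfies the no-signalling condition: ∑ⱼ f(x⊗vⱼ) = ∑ₖ f(x⊗wₖ) for any two orthonormal bases (vⱼ), (wₖ) of H₂ and any unit vector x ∈ H₁. -/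
section GeneralLemmas

open Submodule Finset

variable {E : Type*} [NormedAddCommGroup E] [InnerProductSpace ℂ E]

local notation "⟪" x ", " y "⟫" => @inner ℂ _ _ x y

lemma pairON {a b : E} (ha : ‖a‖ = 1) (hb : ‖b‖ = 1) (hab : ⟪a, b⟫ = 0) :
    Orthonormal ℂ ![a, b] := by
  rw [orthonormal_iff_ite]
  have hba : ⟪b, a⟫ = 0 := inner_eq_zero_symm.mp hab
  intro i j
  fin_cases i <;> fin_cases j <;>
    simp [inner_self_eq_norm_sq_to_K, ha, hb, hab, hba]

lemma consON {k : ℕ} {x : E} {g : Fin k → E} (hx : ‖x‖ = 1) (hg : Orthonormal ℂ g)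
    (hxg : ∀ j, ⟪x, g j⟫ = 0) : Orthonormal ℂ (Fin.cons x g) := by
  constructor
  · intro i
    refine Fin.cases ?_ ?_ i
    · simpa using hx
    · intro j; simpa using hg.1 j
  · intro i j hij
    rcases Fin.eq_zero_or_eq_succ i with rfl | ⟨i', rfl⟩ <;>
      rcases Fin.eq_zero_or_eq_succ j with rfl | ⟨j', rfl⟩
    · exact absurd rfl hij
    · simpa using hxg j'
    · simpa using inner_eq_zero_symm.mpr (hxg i')
    · simp only [Fin.cons_succ]
      exact hg.2 (fun h => hij (by rw [h]))

lemma inner_span_zero {x z : E} {s : Set E} (h : ∀ y ∈ s, ⟪x, y⟫ = 0)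
    (hz : z ∈ span ℂ s) : ⟪x, z⟫ = 0 := by
  have hle : span ℂ s ≤ (ℂ ∙ x)ᗮ :=
    span_le.mpr fun y hy => Submodule.mem_orthogonal_singleton_iff_inner_right.mpr (h y hy)
  exact Submodule.mem_orthogonal_singleton_iff_inner_right.mp (hle hz)

lemma tailON {k : ℕ} {g : Fin (k + 1) → E} (hg : Orthonormal ℂ g) :
    Orthonormal ℂ (Fin.tail g) :=
  hg.comp Fin.succ (Fin.succ_injective _)

lemma tail_inner_zero {k : ℕ} {g : Fin (k + 1) → E} (hg : Orthonormal ℂ g)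
    {z : E} (hz : z ∈ span ℂ (Set.range (Fin.tail g))) : ⟪g 0, z⟫ = 0 := by
  refine inner_span_zero ?_ hz
  rintro _ ⟨j, rfl⟩
  exact hg.2 (Fin.succ_ne_zero j).symm

lemma tail_span {k : ℕ} {g : Fin (k + 1) → E} (hg : Orthonormal ℂ g) :
    span ℂ (Set.range (Fin.tail g)) = span ℂ (Set.range g) ⊓ (ℂ ∙ g 0)ᗮ := by
  apply le_antisymm
  · refine le_inf (span_mono ?_) (span_le.mpr ?_)
    · rintro _ ⟨j, rfl⟩; exact ⟨j.succ, rfl⟩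
    · rintro _ ⟨j, rfl⟩
      exact Submodule.mem_orthogonal_singleton_iff_inner_right.mpr
        (hg.2 (Fin.succ_ne_zero j).symm)
  · intro z hz
    obtain ⟨hz1, hz2⟩ := Submodule.mem_inf.mp hz
    rw [Fin.range_fin_succ] at hz1
    obtain ⟨a, z', hz', rfl⟩ := Submodule.mem_span_insert.mp hz1
    have h0 : ⟪g 0, z'⟫ = 0 := tail_inner_zero hg hz'
    have hgg : ⟪g 0, g 0⟫ = (1 : ℂ) := by
      simp [inner_self_eq_norm_sq_to_K, hg.1 0]
    have ha : a = 0 := by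
      have := Submodule.mem_orthogonal_singleton_iff_inner_right.mp hz2
      rw [inner_add_right, inner_smul_right, h0, hgg] at this
      simpa using this
    simpa [ha] using hz'

lemma exists_first (F : E → ℝ)
    (hQ : ∀ (c : ℂ) (y : E), ‖c‖ = 1 → ‖y‖ = 1 → F (c • y) = F y)
    (hP : ∀ v₁ v₂ w₁ w₂ : E, Orthonormal ℂ ![v₁, v₂] → Orthonormal ℂ ![w₁, w₂] →
      span ℂ {v₁, v₂} = span ℂ {w₁, w₂} → F v₁ + F v₂ = F w₁ + F w₂) :
    ∀ (k : ℕ) (v : Fin (k + 1) → E), Orthonormal ℂ v → ∀ u : E, ‖u‖ = 1 →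
      u ∈ span ℂ (Set.range v) →
      ∃ v' : Fin (k + 1) → E, Orthonormal ℂ v' ∧ v' 0 = u ∧
        span ℂ (Set.range v') = span ℂ (Set.range v) ∧
        ∑ j, F (v' j) = ∑ j, F (v j) := by
  intro k
  induction k with
  | zero =>
    intro v hv u hu humem
    have hr : Set.range v = {v 0} := by
      ext p
      simp only [Set.mem_range, Set.mem_singleton_iff]
      constructor
      · rintro ⟨i, rfl⟩
        refine Fin.cases rfl (fun j => j.elim0) i
      · rintro rfl; exact ⟨0, rfl⟩
    rw [hr, mem_span_singleton] at humem
    obtain ⟨c, hc⟩ := humem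
    have hc1 : ‖c‖ = 1 := by
      have : ‖u‖ = ‖c‖ * ‖v 0‖ := by rw [← hc, norm_smul]
      rw [hu, hv.1 0, mul_one] at this
      exact this.symm
    refine ⟨fun _ => u, ?_, rfl, ?_, ?_⟩
    · constructor
      · intro i; simpa using hu
      · intro i j hij
        exact absurd (Fin.ext (by omega)) hij
    · rw [hr, Set.range_const, ← hc, span_singleton_smul_eq (isUnit_iff_ne_zero.mpr
        (fun h => by simp [h] at hc1)) _]
    · rw [Fin.sum_univ_one, Fin.sum_univ_one, ← hc, hQ c (v 0) hc1 (hv.1 0)]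
  | succ k ih =>
    intro v hv u hu humem
    set c : ℂ := ⟪v 0, u⟫ with hcdef
    have hrange : Set.range v = insert (v 0) (Set.range (Fin.tail v)) := Fin.range_fin_succ v
    have hvv : ⟪v 0, v 0⟫ = (1 : ℂ) := by simp [inner_self_eq_norm_sq_to_K, hv.1 0]
    obtain ⟨a, z, hz, hudec⟩ := Submodule.mem_span_insert.mp (hrange ▸ humem)
    have hac : a = c := by
      have h0 : ⟪v 0, z⟫ = 0 := tail_inner_zero hv hz
      rw [hcdef, hudec, inner_add_right, inner_smul_right, hvv, h0]; ring
    rw [hac] at hudec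
    by_cases hy : z = 0
    · -- u = a • v 0 : replace the head by its phase multiple
      rw [hy, add_zero] at hudec
      have ha1 : ‖c‖ = 1 := by
        have : ‖u‖ = ‖c‖ * ‖v 0‖ := by rw [hudec, norm_smul]
        rw [hu, hv.1 0, mul_one] at this; exact this.symm
      refine ⟨Fin.cons u (Fin.tail v), ?_, rfl, ?_, ?_⟩
      · refine consON hu (tailON hv) fun j => ?_
        rw [hudec, inner_smul_left]
        rw [show Fin.tail v j = v j.succ from rfl]
        rw [hv.2 (Fin.succ_ne_zero j).symm, mul_zero]
      · rw [Fin.range_cons, hrange, span_insert, span_insert, hudec,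
          span_singleton_smul_eq (isUnit_iff_ne_zero.mpr
            (fun h => by simp [h] at ha1)) _]
      · rw [Fin.sum_univ_succ, Fin.sum_univ_succ]
        simp only [Fin.cons_zero, Fin.cons_succ]
        rw [hudec, hQ c (v 0) ha1 (hv.1 0),
          Fin.sum_univ_succ (f := fun j => F (v j)),
          Fin.sum_univ_succ (f := fun j => F (v j.succ))]
        rfl
    · -- main rotation case
      set r : ℝ := ‖z‖ with hrdef
      have hrpos : 0 < r := norm_pos_iff.mpr hy
      have hrne : (r : ℂ) ≠ 0 := by exact_mod_cast hrpos.ne'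
      set b : E := (r : ℂ)⁻¹ • z with hbdef
      have hb1 : ‖b‖ = 1 := by
        rw [hbdef, norm_smul, norm_inv]
        simp only [Complex.norm_real, Real.norm_eq_abs, abs_of_pos hrpos]
        exact inv_mul_cancel₀ hrpos.ne'
      have hbz : (r : ℂ) • b = z := by
        rw [hbdef, smul_smul, mul_inv_cancel₀ hrne, one_smul]
      have hbmem : b ∈ span ℂ (Set.range (Fin.tail v)) := smul_mem _ _ hz
      have hv0b : ⟪v 0, b⟫ = 0 := tail_inner_zero hv hbmem
      have hbv0 : ⟪b, v 0⟫ = 0 := inner_eq_zero_symm.mp hv0b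
      have hbb : ⟪b, b⟫ = (1 : ℂ) := by simp [inner_self_eq_norm_sq_to_K, hb1]
      have hu2 : u = c • v 0 + (r : ℂ) • b := by rw [hbz, hudec]
      have hcc : (starRingEnd ℂ) c * c + (r : ℂ) ^ 2 = 1 := by
        have h1 : ⟪u, u⟫ = (1 : ℂ) := by simp [inner_self_eq_norm_sq_to_K, hu]
        rw [hu2] at h1
        simp only [inner_add_left, inner_add_right, inner_smul_left, inner_smul_right,
          hvv, hv0b, hbv0, hbb, Complex.conj_ofReal] at h1
        linear_combination h1
      obtain ⟨t, htON, ht0, htsp, htsum⟩ := ih (Fin.tail v) (tailON hv) b hb1 hbmem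
      set a' : E := -(r : ℂ) • v 0 + (starRingEnd ℂ) c • b with ha'def
      have hua' : ⟪u, a'⟫ = 0 := by
        rw [hu2, ha'def]
        simp only [inner_add_left, inner_add_right, inner_smul_left, inner_smul_right,
          hvv, hv0b, hbv0, hbb, Complex.conj_ofReal, map_neg]
        ring
      have ha'1 : ‖a'‖ = 1 := by
        have h2 : ⟪a', a'⟫ = (1 : ℂ) := by
          rw [ha'def]
          simp only [inner_add_left, inner_add_right, inner_smul_left, inner_smul_right,
            hvv, hv0b, hbv0, hbb, Complex.conj_ofReal, map_neg, Complex.conj_conj]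
          linear_combination hcc
        have h3 := inner_self_eq_norm_sq (𝕜 := ℂ) (E := E) a'
        rw [h2] at h3
        have h4 : ‖a'‖ ^ 2 = (1 : ℝ) := by simpa using h3.symm
        nlinarith [norm_nonneg a']
      have hv0' : v 0 = (starRingEnd ℂ) c • u - (r : ℂ) • a' := by
        rw [hu2, ha'def]
        match_scalars
        all_goals try ring
        all_goals (first | linear_combination -hcc | linear_combination hcc | linear_combination (-((r : ℂ))⁻¹) * hcc | linear_combination ((r : ℂ))⁻¹ * hcc | linear_combination 2 * hcc)
      have hb' : b = (r : ℂ) • u + c • a' := by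
        rw [hu2, ha'def]
        match_scalars
        all_goals try ring
        all_goals (first | linear_combination -hcc | linear_combination hcc | linear_combination (-((r : ℂ))⁻¹) * hcc | linear_combination ((r : ℂ))⁻¹ * hcc | linear_combination 2 * hcc)
      have hspan2 : span ℂ ({v 0, b} : Set E) = span ℂ ({u, a'} : Set E) := by
        apply le_antisymm <;> rw [span_le]
        · rintro p (rfl | rfl)
          · exact mem_span_pair.mpr ⟨(starRingEnd ℂ) c, -(r : ℂ), by rw [hv0']; module⟩
          · exact mem_span_pair.mpr ⟨(r : ℂ), c, hb'.symm⟩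
        · rintro p (rfl | rfl)
          · exact mem_span_pair.mpr ⟨c, (r : ℂ), hu2.symm⟩
          · exact mem_span_pair.mpr ⟨-(r : ℂ), (starRingEnd ℂ) c, ha'def.symm⟩
      have hPrel : F (v 0) + F b = F u + F a' :=
        hP (v 0) b u a' (pairON (hv.1 0) hb1 hv0b) (pairON hu ha'1 hua') hspan2
      have htail_t : ∀ j : Fin k, Fin.tail t j ∈ span ℂ (Set.range (Fin.tail v)) := by
        intro j
        rw [← htsp]
        exact subset_span ⟨j.succ, rfl⟩
      have hinner_u : ∀ j : Fin k, ⟪u, Fin.tail t j⟫ = 0 := by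
        intro j
        have h1 : ⟪v 0, Fin.tail t j⟫ = 0 := tail_inner_zero hv (htail_t j)
        have h2 : ⟪b, Fin.tail t j⟫ = 0 := by
          rw [← ht0]; exact htON.2 (Fin.succ_ne_zero j).symm
        rw [hu2, inner_add_left, inner_smul_left, inner_smul_left, h1, h2]
        ring
      have hinner_a' : ∀ j : Fin k, ⟪a', Fin.tail t j⟫ = 0 := by
        intro j
        have h1 : ⟪v 0, Fin.tail t j⟫ = 0 := tail_inner_zero hv (htail_t j)
        have h2 : ⟪b, Fin.tail t j⟫ = 0 := by
          rw [← ht0]; exact htON.2 (Fin.succ_ne_zero j).symm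
        rw [ha'def, inner_add_left, inner_smul_left, inner_smul_left, h1, h2]
        ring
      refine ⟨Fin.cons u (Fin.cons a' (Fin.tail t)), ?_, rfl, ?_, ?_⟩
      · refine consON hu (consON ha'1 (tailON htON) hinner_a') fun j => ?_
        refine Fin.cases ?_ ?_ j
        · simpa using hua'
        · intro j'; simpa using hinner_u j'
      · -- span equality
        apply le_antisymm <;> rw [span_le]
        · rintro p hp
          rw [Fin.range_cons, Fin.range_cons] at hp
          have hv0mem : v 0 ∈ span ℂ (Set.range v) := subset_span ⟨0, rfl⟩
          have hbmemv : b ∈ span ℂ (Set.range v) := by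
            refine span_mono ?_ hbmem
            rintro _ ⟨j, rfl⟩; exact ⟨j.succ, rfl⟩
          rcases hp with rfl | hp
          · exact humem
          rcases hp with rfl | hp
          · rw [ha'def]
            exact add_mem (smul_mem _ _ hv0mem) (smul_mem _ _ hbmemv)
          · obtain ⟨j, rfl⟩ := hp
            refine span_mono ?_ (htail_t j)
            rintro _ ⟨j', rfl⟩; exact ⟨j'.succ, rfl⟩
        · set v' : Fin (k + 1 + 1) → E := Fin.cons u (Fin.cons a' (Fin.tail t)) with hv'def
          have humem' : u ∈ span ℂ (Set.range v') := subset_span ⟨0, rfl⟩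
          have ha'mem' : a' ∈ span ℂ (Set.range v') := by
            refine subset_span ⟨Fin.succ 0, ?_⟩
            rw [hv'def]
            simp
          have hbmem' : b ∈ span ℂ (Set.range v') := by
            rw [hb']
            exact add_mem (smul_mem _ _ humem') (smul_mem _ _ ha'mem')
          have htmem' : ∀ i, t i ∈ span ℂ (Set.range v') := by
            intro i
            refine Fin.cases ?_ ?_ i
            · rw [ht0]; exact hbmem'
            · intro j
              refine subset_span ⟨j.succ.succ, ?_⟩
              rw [hv'def]
              simp [Fin.tail]
          rintro _ ⟨i, rfl⟩
          refine Fin.cases ?_ ?_ i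
          · rw [hv0']
            exact sub_mem (smul_mem _ _ humem') (smul_mem _ _ ha'mem')
          · intro j
            have : v j.succ ∈ span ℂ (Set.range t) := by
              rw [htsp]; exact subset_span ⟨j, rfl⟩
            refine span_le.mpr ?_ this
            rintro _ ⟨i', rfl⟩; exact htmem' i'
      · -- sums
        rw [Fin.sum_univ_succ]
        simp only [Fin.cons_zero, Fin.cons_succ]
        rw [Fin.sum_univ_succ]
        simp only [Fin.cons_zero, Fin.cons_succ]
        have hts : ∑ j, F (t j) = F b + ∑ j, F (Fin.tail t j) := by
          rw [Fin.sum_univ_succ, ht0]; rfl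
        have hvs : ∑ j, F (v j) = F (v 0) + ∑ j, F (Fin.tail v j) := by
          rw [Fin.sum_univ_succ]; rfl
        have h5 : ∑ j, F (Fin.tail t j) = ∑ j, F (t j) - F b := by rw [hts]; ring
        rw [hvs, ← htsum, hts]
        ring_nf
        linarith [hPrel]

lemma key_sum_eq (F : E → ℝ)
    (hQ : ∀ (c : ℂ) (y : E), ‖c‖ = 1 → ‖y‖ = 1 → F (c • y) = F y)
    (hP : ∀ v₁ v₂ w₁ w₂ : E, Orthonormal ℂ ![v₁, v₂] → Orthonormal ℂ ![w₁, w₂] →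
      span ℂ {v₁, v₂} = span ℂ {w₁, w₂} → F v₁ + F v₂ = F w₁ + F w₂) :
    ∀ (k : ℕ) (v w : Fin k → E), Orthonormal ℂ v → Orthonormal ℂ w →
      span ℂ (Set.range v) = span ℂ (Set.range w) →
      ∑ j, F (v j) = ∑ j, F (w j) := by
  intro k
  induction k with
  | zero => intro v w _ _ _; simp
  | succ k ih =>
    intro v w hv hw hsp
    have hu : w 0 ∈ span ℂ (Set.range v) := by
      rw [hsp]; exact subset_span ⟨0, rfl⟩
    obtain ⟨v', hv', h0, hsp', hsum⟩ := exists_first F hQ hP k v hv (w 0) (hw.1 0) hu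
    have htails : span ℂ (Set.range (Fin.tail v')) = span ℂ (Set.range (Fin.tail w)) := by
      rw [tail_span hv', tail_span hw, hsp', hsp, h0]
    have h2 := ih (Fin.tail v') (Fin.tail w) (tailON hv') (tailON hw) htails
    rw [← hsum, Fin.sum_univ_succ, Fin.sum_univ_succ (f := fun j => F (w j)), h0]
    have h3 : ∑ j : Fin k, F (v' j.succ) = ∑ j : Fin k, F (w j.succ) := h2
    rw [h3]

end GeneralLemmas

lemma prodVec_smul {n m : ℕ} (c : ℂ) (x : EuclideanSpace ℂ (Fin n))
    (y : EuclideanSpace ℂ (Fin m)) : prodVec x (c • y) = prodVec (c • x) y := by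
  unfold prodVec
  refine congrArg _ (funext fun p => ?_)
  simp only [PiLp.smul_apply, smul_eq_mul]
  ring

/-- Conversely: if a function on product unit vectors has constant sum `W` on
all product bases and is invariant under rotations within two-dimensional
local subspaces, then it satisfies the no-signalling condition: the sum over
any local orthonormal basis of the second factor, with a fixed unit vector in
the first factor, is basis-independent. -/
theorem two_dim_invariance_implies_nonsignalling {n m : ℕ}
    (f : EuclideanSpace ℂ (Fin n × Fin m) → ℝ) (W : ℝ)
    (hweight : ∀ (b₁ : OrthonormalBasis (Fin n) ℂ (EuclideanSpace ℂ (Fin n)))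
      (b₂ : OrthonormalBasis (Fin m) ℂ (EuclideanSpace ℂ (Fin m))),
      ∑ j, ∑ k, f (prodVec (b₁ j) (b₂ k)) = W)
    (hinv : ∀ (x : EuclideanSpace ℂ (Fin n)), ‖x‖ = 1 →
      ∀ (v₁ v₂ w₁ w₂ : EuclideanSpace ℂ (Fin m)),
      Orthonormal ℂ ![v₁, v₂] → Orthonormal ℂ ![w₁, w₂] →
      Submodule.span ℂ {v₁, v₂} = Submodule.span ℂ {w₁, w₂} →
      f (prodVec x v₁) + f (prodVec x v₂) = f (prodVec x w₁) + f (prodVec x w₂))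
    (x : EuclideanSpace ℂ (Fin n)) (hx : ‖x‖ = 1)
    (v w : OrthonormalBasis (Fin m) ℂ (EuclideanSpace ℂ (Fin m))) :
    ∑ j, f (prodVec x (v j)) = ∑ k, f (prodVec x (w k)) := by
  rcases m with _ | m
  · simp
  rcases m with _ | m
  · -- one-dimensional second factor: use the weight condition
    -- w 0 is a unit multiple of v 0
    have hvsp : Submodule.span ℂ (Set.range ⇑v) = ⊤ := by
      rw [← OrthonormalBasis.coe_toBasis]; exact v.toBasis.span_eq
    have hr : Set.range ⇑v = {v 0} := by
      ext p
      simp only [Set.mem_range, Set.mem_singleton_iff]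
      constructor
      · rintro ⟨i, rfl⟩
        refine Fin.cases rfl (fun j => j.elim0) i
      · rintro rfl; exact ⟨0, rfl⟩
    have hw0 : w 0 ∈ Submodule.span ℂ ({v 0} : Set _) := by
      rw [← hr, hvsp]; trivial
    obtain ⟨c, hc⟩ := Submodule.mem_span_singleton.mp hw0
    have hc1 : ‖c‖ = 1 := by
      have h1 : ‖w 0‖ = ‖c‖ * ‖v 0‖ := by rw [← hc, norm_smul]
      rw [w.orthonormal.1 0, v.orthonormal.1 0, mul_one] at h1
      exact h1.symm
    -- n must be positive
    rcases n with _ | n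
    · exfalso
      have hx0 : x = 0 := by
        ext i; exact i.elim0
      rw [hx0, norm_zero] at hx
      exact zero_ne_one hx
    -- extend x to an orthonormal basis b₁
    have hcard : Module.finrank ℂ (EuclideanSpace ℂ (Fin (n + 1))) =
        Fintype.card (Fin (n + 1)) := by simp
    have hONx : Orthonormal ℂ (({0} : Set (Fin (n + 1))).restrict (fun _ => x)) := by
      constructor
      · intro i; exact hx
      · intro i j hij
        exfalso
        apply hij
        have hi : (i : Fin (n + 1)) = 0 := i.2
        have hj : (j : Fin (n + 1)) = 0 := j.2
        exact Subtype.ext (hi.trans hj.symm)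
    obtain ⟨b₁, hb₁⟩ := hONx.exists_orthonormalBasis_extension_of_card_eq hcard
    have hb₁0 : b₁ 0 = x := hb₁ 0 rfl
    -- the modified family with head replaced by c • x
    set B : Fin (n + 1) → EuclideanSpace ℂ (Fin (n + 1)) :=
      Function.update ⇑b₁ 0 (c • x) with hBdef
    have hB0 : B 0 = c • x := Function.update_self _ _ _
    have hBne : ∀ i : Fin (n + 1), i ≠ 0 → B i = b₁ i := fun i hi =>
      Function.update_of_ne hi _ _
    have hcx1 : ‖c • x‖ = 1 := by rw [norm_smul, hc1, hx, one_mul]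
    have hBON : Orthonormal ℂ B := by
      constructor
      · intro i
        by_cases hi : i = 0
        · rw [hi, hB0]; exact hcx1
        · rw [hBne i hi]; exact b₁.orthonormal.1 i
      · intro i j hij
        by_cases hi : i = 0
        · subst hi
          have hj : j ≠ 0 := fun h => hij h.symm
          rw [hB0, hBne j hj, ← hb₁0, inner_smul_left,
            b₁.orthonormal.2 (fun h => hj h.symm), mul_zero]
        · by_cases hj : j = 0
          · subst hj
            rw [hB0, hBne i hi, ← hb₁0, inner_smul_right, b₁.orthonormal.2 hi, mul_zero]
          · rw [hBne i hi, hBne j hj]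
            exact b₁.orthonormal.2 hij
    have hBsp : ⊤ ≤ Submodule.span ℂ (Set.range B) := by
      have hb₁sp : Submodule.span ℂ (Set.range ⇑b₁) = ⊤ := by
        rw [← OrthonormalBasis.coe_toBasis]; exact b₁.toBasis.span_eq
      rw [← hb₁sp]
      refine Submodule.span_le.mpr ?_
      rintro _ ⟨i, rfl⟩
      by_cases hi : i = 0
      · subst hi
        have hcx : c • x ∈ Submodule.span ℂ (Set.range B) :=
          Submodule.subset_span ⟨0, hB0⟩
        have hcne : c ≠ 0 := fun h => by simp [h] at hc1
        have := Submodule.smul_mem _ c⁻¹ hcx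
        rw [smul_smul, inv_mul_cancel₀ hcne, one_smul] at this
        rwa [hb₁0]
      · exact Submodule.subset_span ⟨i, hBne i hi⟩
    set B' : OrthonormalBasis (Fin (n + 1)) ℂ (EuclideanSpace ℂ (Fin (n + 1))) :=
      OrthonormalBasis.mk hBON hBsp with hB'def
    have hB'coe : ⇑B' = B := OrthonormalBasis.coe_mk _ _
    have h1 := hweight b₁ v
    have h2 := hweight B' v
    simp only [Fin.sum_univ_succ, Finset.univ_eq_empty, Finset.sum_empty, add_zero,
      hB'coe] at h1 h2
    have hrest : ∑ j : Fin n, f (prodVec (B j.succ) (v 0)) =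
        ∑ j : Fin n, f (prodVec (b₁ j.succ) (v 0)) :=
      Finset.sum_congr rfl fun j _ => by rw [hBne _ (Fin.succ_ne_zero j)]
    rw [hrest, hB0] at h2
    rw [hb₁0] at h1
    have hkey : f (prodVec (c • x) (v 0)) = f (prodVec x (v 0)) := by linarith
    rw [Fin.sum_univ_one, Fin.sum_univ_one, ← hc, prodVec_smul, hkey]
  · -- dimension at least two: use the rotation machinery
    set F : EuclideanSpace ℂ (Fin (m + 1 + 1)) → ℝ := fun y => f (prodVec x y) with hF
    have hQ : ∀ (c : ℂ) (y : EuclideanSpace ℂ (Fin (m + 1 + 1))),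
        ‖c‖ = 1 → ‖y‖ = 1 → F (c • y) = F y := by
      intro c y hcn hyn
      have hcard : Module.finrank ℂ (EuclideanSpace ℂ (Fin (m + 1 + 1))) =
          Fintype.card (Fin (m + 1 + 1)) := by simp
      have hONy : Orthonormal ℂ (({0} : Set (Fin (m + 1 + 1))).restrict (fun _ => y)) := by
        constructor
        · intro i; exact hyn
        · intro i j hij
          exfalso
          apply hij
          have hi : (i : Fin (m + 1 + 1)) = 0 := i.2
          have hj : (j : Fin (m + 1 + 1)) = 0 := j.2
          exact Subtype.ext (hi.trans hj.symm)
      obtain ⟨b, hb⟩ := hONy.exists_orthonormalBasis_extension_of_card_eq hcard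
      have hb0 : b 0 = y := hb 0 rfl
      have h01 : (0 : Fin (m + 1 + 1)) ≠ 1 := by
        intro h
        exact absurd (congrArg Fin.val h) (by simp)
      have hz1 : ‖b 1‖ = 1 := b.orthonormal.1 1
      have hyz : inner ℂ y (b 1) = (0 : ℂ) := by
        rw [← hb0]; exact b.orthonormal.2 h01
      have hcy : inner ℂ (c • y) (b 1) = (0 : ℂ) := by
        rw [inner_smul_left, hyz, mul_zero]
      have hcy1 : ‖c • y‖ = 1 := by rw [norm_smul, hcn, hyn, one_mul]
      have hcne : c ≠ 0 := fun h => by simp [h] at hcn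
      have hsp : Submodule.span ℂ ({c • y, b 1} : Set _) =
          Submodule.span ℂ ({y, b 1} : Set _) := by
        rw [Submodule.span_insert, Submodule.span_insert,
          Submodule.span_singleton_smul_eq (isUnit_iff_ne_zero.mpr hcne)]
      have := hinv x hx (c • y) (b 1) y (b 1)
        (pairON hcy1 hz1 hcy) (pairON hyn hz1 hyz) hsp
      simpa [hF] using by linarith [this]
    have hP : ∀ v₁ v₂ w₁ w₂ : EuclideanSpace ℂ (Fin (m + 1 + 1)),
        Orthonormal ℂ ![v₁, v₂] → Orthonormal ℂ ![w₁, w₂] →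
        Submodule.span ℂ {v₁, v₂} = Submodule.span ℂ {w₁, w₂} →
        F v₁ + F v₂ = F w₁ + F w₂ := fun v₁ v₂ w₁ w₂ h1 h2 h3 =>
      hinv x hx v₁ v₂ w₁ w₂ h1 h2 h3
    have hvsp : Submodule.span ℂ (Set.range ⇑v) = ⊤ := by
      rw [← OrthonormalBasis.coe_toBasis]; exact v.toBasis.span_eq
    have hwsp : Submodule.span ℂ (Set.range ⇑w) = ⊤ := by
      rw [← OrthonormalBasis.coe_toBasis]; exact w.toBasis.span_eq
    exact key_sum_eq F hQ hP (m + 1 + 1) ⇑v ⇑w v.orthonormal w.orthonormal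
      (hvsp.trans hwsp.symm)
end

section
/- Choi's theorem: a linear map φ : M_n(ℂ) → M_m(ℂ) is completely positive if and only if its Choi matrix ρ_φ := ∑_{i,j} E_{ij} ⊗ φ(E_{ij}) is positive semidefinite, where E_{ij} are the matrix units. -/
open Matrix ComplexOrder
open scoped Kronecker

lemma choi_entry {n m : ℕ}
    (φ : Matrix (Fin n) (Fin n) ℂ →ₗ[ℂ] Matrix (Fin m) (Fin m) ℂ)
    (r s : Fin n) (c d : Fin m) :
    (∑ i : Fin n, ∑ j : Fin n,
      (Matrix.single i j (1 : ℂ)) ⊗ₖ φ (Matrix.single i j 1)) (r, c) (s, d)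
    = φ (Matrix.single r s 1) c d := by
  simp [Matrix.sum_apply, kroneckerMap_apply, Matrix.single, ite_and, Finset.sum_ite_eq]

lemma phi_apply_entry {n m : ℕ}
    (φ : Matrix (Fin n) (Fin n) ℂ →ₗ[ℂ] Matrix (Fin m) (Fin m) ℂ)
    (A : Matrix (Fin n) (Fin n) ℂ) (c d : Fin m) :
    φ A c d = ∑ r : Fin n, ∑ s : Fin n, A r s * φ (Matrix.single r s 1) c d := by
  conv_lhs => rw [matrix_eq_sum_single A]
  simp only [map_sum, Matrix.sum_apply]
  refine Finset.sum_congr rfl fun r _ => Finset.sum_congr rfl fun s _ => ?_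
  have h1 : Matrix.single r s (A r s) = A r s • Matrix.single r s (1:ℂ) := by
    simp
  rw [h1, LinearMap.map_smul]
  simp

/-- Choi's theorem: a linear map `φ : Mₙ(ℂ) → Mₘ(ℂ)` is completely positive
(all ampliations `id_k ⊗ φ` preserve positive semidefiniteness) if and only
if its Choi matrix `ρ_φ = ∑_{i,j} E_{ij} ⊗ φ(E_{ij})` is positive
semidefinite. -/
theorem choi_theorem {n m : ℕ}
    (φ : Matrix (Fin n) (Fin n) ℂ →ₗ[ℂ] Matrix (Fin m) (Fin m) ℂ) :
    (∀ (k : ℕ) (M : Matrix (Fin k × Fin n) (Fin k × Fin n) ℂ), M.PosSemidef →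
      (Matrix.of fun p q : Fin k × Fin m =>
        (φ (Matrix.of fun r s => M (p.1, r) (q.1, s))) p.2 q.2).PosSemidef)
    ↔ (∑ i : Fin n, ∑ j : Fin n,
        (Matrix.single i j (1 : ℂ)) ⊗ₖ φ (Matrix.single i j 1)).PosSemidef := by
  constructor
  · intro h
    set B : Matrix (Fin 1) (Fin n × Fin n) ℂ :=
      Matrix.of fun _ p => if p.1 = p.2 then 1 else 0 with hB
    have hM : (Bᴴ * B).PosSemidef := posSemidef_conjTranspose_mul_self B
    have key := h n (Bᴴ * B) hM
    have heq : (∑ i : Fin n, ∑ j : Fin n,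
        (Matrix.single i j (1 : ℂ)) ⊗ₖ φ (Matrix.single i j 1)) =
        (Matrix.of fun p q : Fin n × Fin m =>
          (φ (Matrix.of fun r s => (Bᴴ * B) (p.1, r) (q.1, s))) p.2 q.2) := by
      ext ⟨p1, p2⟩ ⟨q1, q2⟩
      rw [choi_entry]
      simp only [Matrix.of_apply]
      have hb : (Matrix.of fun r s => (Bᴴ * B) ((p1, p2).1, r) ((q1, q2).1, s)) =
          Matrix.single p1 q1 (1:ℂ) := by
        ext r s
        simp only [Matrix.of_apply, Matrix.mul_apply, Matrix.conjTranspose_apply, hB,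
          Fin.sum_univ_one, Matrix.single]
        split_ifs <;> simp_all
      rw [hb]
    rw [heq]; exact key
  · intro hρ k M hM
    obtain ⟨S, hS⟩ : ∃ S : Matrix (Fin k × Fin n) (Fin k × Fin n) ℂ, M = Sᴴ * S := by
      open MatrixOrder Matrix.Norms.L2Operator in
      exact CStarAlgebra.nonneg_iff_eq_star_mul_self.mp hM.nonneg
    set ρ := (∑ i : Fin n, ∑ j : Fin n,
        (Matrix.single i j (1 : ℂ)) ⊗ₖ φ (Matrix.single i j 1)) with hρdef
    set X : (Fin k × Fin n) → Matrix (Fin k × Fin m) (Fin n × Fin m) ℂ :=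
      fun t => Matrix.of fun p rc =>
        (starRingEnd ℂ) (S t (p.1, rc.1)) * (if p.2 = rc.2 then 1 else 0) with hX
    have key : (Matrix.of fun p q : Fin k × Fin m =>
        (φ (Matrix.of fun r s => M (p.1, r) (q.1, s))) p.2 q.2) =
        ∑ t : Fin k × Fin n, X t * ρ * (X t)ᴴ := by
      ext ⟨p1, p2⟩ ⟨q1, q2⟩
      have hr : ∀ t : Fin k × Fin n,
          (X t * ρ * (X t)ᴴ) (p1, p2) (q1, q2)
          = ∑ r : Fin n, ∑ s : Fin n,
            (starRingEnd ℂ) (S t (p1, r)) * S t (q1, s) *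
              φ (Matrix.single r s 1) p2 q2 := by
        intro t
        rw [Matrix.mul_apply]
        simp only [Matrix.mul_apply, conjTranspose_apply, hX, Matrix.of_apply,
          Fintype.sum_prod_type, hρdef, choi_entry, star_mul', RCLike.star_def,
          Complex.conj_conj, mul_ite, ite_mul, mul_one, mul_zero, one_mul, zero_mul,
          apply_ite (starRingEnd ℂ), map_zero, Finset.sum_ite_eq, Finset.sum_ite_eq',
          Finset.mem_univ, if_true, Finset.sum_mul]
        rw [Finset.sum_comm]
        refine Finset.sum_congr rfl fun r _ => Finset.sum_congr rfl fun s _ => ?_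
        ring
      calc (Matrix.of fun p q : Fin k × Fin m =>
            (φ (Matrix.of fun r s => M (p.1, r) (q.1, s))) p.2 q.2) (p1, p2) (q1, q2)
          = ∑ r : Fin n, ∑ s : Fin n,
              M ((p1, r)) ((q1, s)) * φ (Matrix.single r s 1) p2 q2 := by
            rw [Matrix.of_apply, phi_apply_entry]
            simp only [Matrix.of_apply]
        _ = ∑ r : Fin n, ∑ s : Fin n, ∑ t : Fin k × Fin n,
              (starRingEnd ℂ) (S t (p1, r)) * S t (q1, s) *
                φ (Matrix.single r s 1) p2 q2 := by
            refine Finset.sum_congr rfl fun r _ => Finset.sum_congr rfl fun s _ => ?_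
            rw [← Finset.sum_mul]
            congr 1
            rw [hS, Matrix.mul_apply]
            simp [Matrix.conjTranspose_apply]
        _ = ∑ t : Fin k × Fin n, ∑ r : Fin n, ∑ s : Fin n,
              (starRingEnd ℂ) (S t (p1, r)) * S t (q1, s) *
                φ (Matrix.single r s 1) p2 q2 := by
            calc (∑ r : Fin n, ∑ s : Fin n, ∑ t : Fin k × Fin n,
                  (starRingEnd ℂ) (S t (p1, r)) * S t (q1, s) *
                    φ (Matrix.single r s 1) p2 q2)
                = ∑ r : Fin n, ∑ t : Fin k × Fin n, ∑ s : Fin n,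
                  (starRingEnd ℂ) (S t (p1, r)) * S t (q1, s) *
                    φ (Matrix.single r s 1) p2 q2 :=
                  Finset.sum_congr rfl fun r _ => Finset.sum_comm
              _ = _ := Finset.sum_comm
        _ = (∑ t : Fin k × Fin n, X t * ρ * (X t)ᴴ) (p1, p2) (q1, q2) := by
            rw [Matrix.sum_apply]
            exact Finset.sum_congr rfl fun t _ => (hr t).symm
    rw [key]
    refine Finset.sum_induction _ _ (fun a b ha hb => ha.add hb) Matrix.PosSemidef.zero ?_
    intro t _
    exact hρ.mul_mul_conjTranspose_same (X t)
end

section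
/- If (vⱼ)ⱼ is an orthonormal basis of H₁ and for each j, (uʲₖ)ₖ is an orthonormal basis of H₂, then the family (vⱼ ⊗ uʲₖ)_{j,k} is an orthonormal basis of H₁ ⊗ H₂. -/
lemma inner_prodVec {n m : ℕ} (x x' : EuclideanSpace ℂ (Fin n))
    (y y' : EuclideanSpace ℂ (Fin m)) :
    (inner ℂ (prodVec x y) (prodVec x' y') : ℂ) = inner ℂ x x' * inner ℂ y y' := by
  simp only [prodVec, EuclideanSpace.inner_eq_star_dotProduct]
  simp [EuclideanSpace.inner_eq_star_dotProduct, dotProduct, Fintype.sum_prod_type,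
    Finset.sum_mul, Finset.mul_sum]
  rw [Finset.sum_comm]
  congr 1; ext j; congr 1; ext k; ring

/-- If `(vⱼ)` is an orthonormal basis of `H₁` and for each `j`, `(uʲₖ)` is an
orthonormal basis of `H₂`, then the family `(vⱼ ⊗ uʲₖ)` is an orthonormal
basis of `H₁ ⊗ H₂`. -/
theorem conditional_product_basis_is_orthonormal_basis {n m : ℕ}
    (v : OrthonormalBasis (Fin n) ℂ (EuclideanSpace ℂ (Fin n)))
    (u : Fin n → OrthonormalBasis (Fin m) ℂ (EuclideanSpace ℂ (Fin m))) :
    Orthonormal ℂ (fun jk : Fin n × Fin m => prodVec (v jk.1) (u jk.1 jk.2)) ∧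
      Submodule.span ℂ
        (Set.range fun jk : Fin n × Fin m => prodVec (v jk.1) (u jk.1 jk.2)) = ⊤ := by
  have horth : Orthonormal ℂ (fun jk : Fin n × Fin m =>
      prodVec (v jk.1) (u jk.1 jk.2)) := by
    rw [orthonormal_iff_ite]
    rintro ⟨j, k⟩ ⟨j', k'⟩
    rw [inner_prodVec]
    rcases eq_or_ne j j' with rfl | hj
    · have := orthonormal_iff_ite.mp (u j).orthonormal k k'
      have hv := orthonormal_iff_ite.mp v.orthonormal j j
      simp_all [Prod.ext_iff]
    · have hv := orthonormal_iff_ite.mp v.orthonormal j j'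
      simp_all [Prod.ext_iff, hj]
  refine ⟨horth, ?_⟩
  rcases isEmpty_or_nonempty (Fin n × Fin m) with he | hne
  · have : n * m = 0 := by
      rcases Nat.eq_zero_or_pos n with h | h
      · simp [h]
      rcases Nat.eq_zero_or_pos m with h' | h'
      · simp [h']
      exact absurd ⟨(⟨0, h⟩, ⟨0, h'⟩)⟩ (not_nonempty_iff.mpr he)
    have hsub : Subsingleton (EuclideanSpace ℂ (Fin n × Fin m)) := by
      have : Fintype.card (Fin n × Fin m) = 0 := by simp [this]
      have : IsEmpty (Fin n × Fin m) := Fintype.card_eq_zero_iff.mp this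
      infer_instance
    exact Subsingleton.elim _ _
  · apply LinearIndependent.span_eq_top_of_card_eq_finrank horth.linearIndependent
    simp
end
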